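/- Let E be a complex Banach algebra, n₀ a positive integer, r ∈ (0,1) and θ ∈ [0,∞). Suppose f : E → E satisfies f(0) = 0 and ‖D_λ f(x,y)‖ ≤ θ(‖x‖^r + ‖y‖^r) for all x, y ∈ E and all λ ∈ T¹_{1/n₀}, and that for each x ∈ E the limit I(x) = lim_{n→∞} 2^{−n} f(2^n x) exists. If in addition | ‖x · f(x)‖ − ‖x‖² | ≤ 2θ·‖x‖^r for all x ∈ E, then ‖x · I(x)‖ = ‖x‖² for all x ∈ E. -/

import Mathlib

open Filter Topology

/-- `D_λ f (x, y) = 2 conj(λ) f((x+y)/2) - f(λx) - f(λy)`. -/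
noncomputable def jensenDiff {E : Type*} [NormedRing E] [NormedAlgebra ℂ E]
    (f : E → E) (l : ℂ) (x y : E) : E :=
  (2 * (starRingEnd ℂ) l) • f ((2 : ℂ)⁻¹ • (x + y)) - f (l • x) - f (l • y)

/-- The arc `T¹_{1/n₀} = {e^{iθ} : 0 ≤ θ ≤ 1/n₀}` of the unit circle. -/
def unitArc (n₀ : ℕ) : Set ℂ :=
  {l : ℂ | ∃ θ : ℝ, 0 ≤ θ ∧ θ ≤ 1 / (n₀ : ℝ) ∧ l = Complex.exp (θ * Complex.I)}

/-- An involution on a complex algebra: conjugate-linear, anti-multiplicative,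
and an involution of order two. -/
def IsInvolution {E : Type*} [NormedRing E] [NormedAlgebra ℂ E] (I : E → E) : Prop :=
  (∀ (x y : E) (l m : ℂ),
      I (l • x + m • y) = (starRingEnd ℂ) l • I x + (starRingEnd ℂ) m • I y) ∧
  (∀ x y : E, I (x * y) = I y * I x) ∧
  (∀ x : E, I (I x) = x)

theorem cstar_identity_rpow_lt_one {E : Type*} [NormedRing E] [NormedAlgebra ℂ E] [CompleteSpace E]
    (n₀ : ℕ) (hn₀ : 0 < n₀) (r : ℝ) (hr0 : 0 < r) (hr1 : r < 1)
    (θ : ℝ) (hθ : 0 ≤ θ)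
    (f : E → E) (hf0 : f 0 = 0)
    (hD : ∀ x y : E, ∀ l ∈ unitArc n₀,
      ‖jensenDiff f l x y‖ ≤ θ * (‖x‖ ^ r + ‖y‖ ^ r))
    (I : E → E)
    (hI : ∀ x : E,
      Tendsto (fun n : ℕ => ((2 : ℂ) ^ n)⁻¹ • f ((2 : ℂ) ^ n • x)) atTop (𝓝 (I x)))
    (hC : ∀ x : E, |‖x * f x‖ - ‖x‖ ^ 2| ≤ 2 * θ * ‖x‖ ^ r) :
    ∀ x : E, ‖x * I x‖ = ‖x‖ ^ 2 := by
  intro x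
  have h1 : Tendsto (fun n : ℕ => x * (((2:ℂ)^n)⁻¹ • f ((2:ℂ)^n • x))) atTop (𝓝 (x * I x)) :=
    (hI x).const_mul x
  have h2 : Tendsto (fun n : ℕ => ‖x * (((2:ℂ)^n)⁻¹ • f ((2:ℂ)^n • x))‖) atTop (𝓝 ‖x * I x‖) :=
    h1.norm
  have heq : ∀ n : ℕ, ‖x * (((2:ℂ)^n)⁻¹ • f ((2:ℂ)^n • x))‖
      = (4:ℝ)⁻¹ ^ n * ‖((2:ℂ)^n • x) * f ((2:ℂ)^n • x)‖ := by
    intro n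
    rw [mul_smul_comm, norm_smul, smul_mul_assoc, norm_smul]
    simp [norm_inv, norm_pow]
    have h4 : (4:ℝ)^n = 2^n * 2^n := by rw [← mul_pow]; norm_num
    rw [h4, mul_inv]
    field_simp
  have key : Tendsto (fun n : ℕ => ‖x * (((2:ℂ)^n)⁻¹ • f ((2:ℂ)^n • x))‖) atTop (𝓝 (‖x‖^2)) := by
    have hbound : ∀ n : ℕ, |‖x * (((2:ℂ)^n)⁻¹ • f ((2:ℂ)^n • x))‖ - ‖x‖^2|
        ≤ (2 * θ * ‖x‖ ^ r) * ((2:ℝ)^r * (4:ℝ)⁻¹) ^ n := by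
      intro n
      have hy : ‖(2:ℂ)^n • x‖ = (2:ℝ)^n * ‖x‖ := by
        rw [norm_smul]; simp [norm_pow]
      have h4 : ((4:ℝ)⁻¹)^n * ‖(2:ℂ)^n • x‖^2 = ‖x‖^2 := by
        rw [hy]; rw [mul_pow]
        have : ((2:ℝ)^n)^2 = 4^n := by
          rw [← pow_mul, mul_comm, pow_mul]; norm_num
        rw [this]
        field_simp
        rw [← mul_pow]; norm_num
      have hr : ‖(2:ℂ)^n • x‖ ^ r = ((2:ℝ)^r)^n * ‖x‖ ^ r := by
        rw [hy, Real.mul_rpow (by positivity) (norm_nonneg x)]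
        congr 1
        rw [← Real.rpow_natCast (2:ℝ) n, ← Real.rpow_natCast ((2:ℝ)^r) n,
          ← Real.rpow_mul (by norm_num), ← Real.rpow_mul (by norm_num), mul_comm]
      rw [heq n, ← h4, ← mul_sub, abs_mul, abs_of_nonneg (by positivity : (0:ℝ) ≤ ((4:ℝ)⁻¹)^n)]
      calc ((4:ℝ)⁻¹)^n * |‖((2:ℂ)^n • x) * f ((2:ℂ)^n • x)‖ - ‖(2:ℂ)^n • x‖^2|
          ≤ ((4:ℝ)⁻¹)^n * (2 * θ * ‖(2:ℂ)^n • x‖ ^ r) := by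
            exact mul_le_mul_of_nonneg_left (hC _) (by positivity)
        _ = (2 * θ * ‖x‖ ^ r) * ((2:ℝ)^r * (4:ℝ)⁻¹) ^ n := by
            rw [hr, mul_pow]; ring
    have hgeo : Tendsto (fun n : ℕ => (2 * θ * ‖x‖ ^ r) * ((2:ℝ)^r * (4:ℝ)⁻¹) ^ n) atTop (𝓝 0) := by
      rw [show (0:ℝ) = (2 * θ * ‖x‖ ^ r) * 0 by ring]
      apply Tendsto.const_mul
      apply tendsto_pow_atTop_nhds_zero_of_lt_one (by positivity)
      have h2r : (2:ℝ)^r < 2 := by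
        calc (2:ℝ)^r < (2:ℝ)^(1:ℝ) := Real.rpow_lt_rpow_left_iff (by norm_num) |>.mpr hr1
          _ = 2 := Real.rpow_one 2
      nlinarith
    have hdiff : Tendsto (fun n : ℕ => ‖x * (((2:ℂ)^n)⁻¹ • f ((2:ℂ)^n • x))‖ - ‖x‖^2) atTop (𝓝 0) :=
      squeeze_zero_norm (fun n => hbound n) hgeo
    have := hdiff.add_const (‖x‖^2)
    simpa using this
  exact tendsto_nhds_unique h2 key
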